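/- Let f_0, …, f_d be tropical polynomials in n variables with integer coefficients and f = ⊕_{i=0}^d f_i ⊗ y^{⊗i}. Then the set of resolutions of f, regarded as functions ℝ^n → ℝ, is finite. -/

import Mathlib

open Finset

/-- A tropical polynomial in `n` variables: a finite nonempty family of monomials
`(c, J)` with real coefficient `c` and exponent `J ∈ ℕ^n`.  It defines the convex
piecewise-linear function `x ↦ min_J (c_J + ⟨J, x⟩)`. -/
structure TropPoly (n : ℕ) where
  monos : Finset (ℝ × (Fin n → ℕ))
  ne : monos.Nonempty

/-- The convex piecewise-linear function defined by a tropical polynomial. -/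
noncomputable def TropPoly.eval {n : ℕ} (f : TropPoly n) (x : Fin n → ℝ) : ℝ :=
  f.monos.inf' f.ne fun p => p.1 + ∑ j, (p.2 j : ℝ) * x j

/-- A tropical Newton–Puiseux polynomial in `n` variables: a finite nonempty family of
monomials `(a, I)` with rational coefficient `a` and exponent `I ∈ ℚ^n`. -/
structure NPPoly (n : ℕ) where
  monos : Finset (ℚ × (Fin n → ℚ))
  ne : monos.Nonempty

/-- The convex piecewise-linear function defined by a tropical Newton–Puiseux polynomial. -/
noncomputable def NPPoly.eval {n : ℕ} (y : NPPoly n) (x : Fin n → ℝ) : ℝ :=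
  y.monos.inf' y.ne fun p => (p.1 : ℝ) + ∑ j, (p.2 j : ℝ) * x j

/-- The value of the term `f_i ⊗ y^{⊗ i}` of `f = ⊕_{i=0}^d f_i ⊗ y^{⊗ i}` at the point `x`,
when the indeterminate `y` has the value `y0`. -/
noncomputable def termVal {n d : ℕ} (f : Fin (d+1) → TropPoly n) (x : Fin n → ℝ) (y0 : ℝ)
    (i : Fin (d+1)) : ℝ :=
  (f i).eval x + (i : ℕ) * y0

/-- At the point `x`, with value `y0` substituted for the indeterminate, the minimum of the
`d+1` values `f_i(x) + i·y0` is attained for at least two distinct indices `i`. -/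
def TiesAt {n d : ℕ} (f : Fin (d+1) → TropPoly n) (x : Fin n → ℝ) (y0 : ℝ) : Prop :=
  ∃ i₁ i₂ : Fin (d+1), i₁ ≠ i₂ ∧ termVal f x y0 i₁ = termVal f x y0 i₂ ∧
    ∀ i, termVal f x y0 i₁ ≤ termVal f x y0 i

/-- A function `y : ℝ^n → ℝ` is a resolution of `f = ⊕_{i=0}^d f_i ⊗ y^{⊗ i}` if at every
point `x` the minimum of the `d+1` values `f_i(x) + i·y(x)` is attained for at least two
distinct indices. -/
def IsResolution {n d : ℕ} (f : Fin (d+1) → TropPoly n) (y : (Fin n → ℝ) → ℝ) : Prop :=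
  ∀ x, TiesAt f x (y x)

/-- A tropical polynomial has integer coefficients. -/
def HasIntCoeffs {n : ℕ} (f : TropPoly n) : Prop :=
  ∀ p ∈ f.monos, ∃ z : ℤ, p.1 = (z : ℝ)

namespace ResolveAux

/-- The affine function on `ℝ^n` determined by a constant and a vector of slopes. -/
noncomputable def aff {n : ℕ} (a : ℝ × (Fin n → ℝ)) (x : Fin n → ℝ) : ℝ :=
  a.1 + ∑ j, a.2 j * x j

lemma continuous_aff {n : ℕ} (a : ℝ × (Fin n → ℝ)) : Continuous (aff a) := by
  unfold aff
  exact continuous_const.add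
    (continuous_finset_sum _ fun j _ => continuous_const.mul (continuous_apply j))

lemma continuous_inf' {n : ℕ} (S : Finset (ℝ × (Fin n → ℝ))) (hS : S.Nonempty) :
    Continuous fun x => S.inf' hS fun a => aff a x := by
  induction hS using Finset.Nonempty.cons_induction with
  | singleton a => simp only [Finset.inf'_singleton]; exact continuous_aff a
  | cons a s ha hs ih =>
      have h2 : (fun x => (Finset.cons a s ha).inf' (Finset.cons_nonempty ha) fun b => aff b x)
          = fun x => min (aff a x) (s.inf' hs fun b => aff b x) := by
        funext x; rw [Finset.inf'_cons]
      rw [h2]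
      exact (continuous_aff a).min ih

/-- Two closed sets with empty interior: the union has empty interior. -/
lemma interior_union_eq_empty {X : Type*} [TopologicalSpace X] {s t : Set X}
    (hs : IsClosed s) (his : interior s = ∅) (hit : interior t = ∅) :
    interior (s ∪ t) = ∅ := by
  have h1 : interior (s ∪ t) \ s ⊆ interior t := by
    intro x hx
    have hopen : IsOpen (interior (s ∪ t) \ s) := isOpen_interior.sdiff hs
    have hsub : interior (s ∪ t) \ s ⊆ t := fun z hz =>
      (interior_subset hz.1).resolve_left hz.2
    exact mem_interior_iff_mem_nhds.2 (Filter.mem_of_superset (hopen.mem_nhds hx) hsub)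
  have h2 : interior (s ∪ t) ⊆ s := by
    intro x hx
    by_contra hxs
    exact absurd (h1 ⟨hx, hxs⟩) (by simp [hit])
  have h3 : interior (s ∪ t) ⊆ interior s := interior_maximal h2 isOpen_interior
  rw [his] at h3
  exact Set.subset_empty_iff.1 h3

lemma interior_biUnion_eq_empty {X : Type*} [TopologicalSpace X] {ι : Type*}
    (I : Finset ι) (s : ι → Set X) :
    (∀ i ∈ I, IsClosed (s i)) → (∀ i ∈ I, interior (s i) = ∅) →
    interior (⋃ i ∈ I, s i) = ∅ := by
  induction I using Finset.cons_induction with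
  | empty => intro _ _; simp
  | cons a t hat ih =>
      intro hcl hint
      simp only [Finset.mem_cons, Set.iUnion_iUnion_eq_or_left]
      exact interior_union_eq_empty (hcl a (Finset.mem_cons_self a t))
        (hint a (Finset.mem_cons_self a t))
        (ih (fun i hi => hcl i (Finset.mem_cons_of_mem hi))
          (fun i hi => hint i (Finset.mem_cons_of_mem hi)))

/-- In a finite closed cover of a nonempty open ball, some set has nonempty interior. -/
lemma exists_nonempty_interior {n : ℕ} {ι : Type*} (I : Finset ι)
    (s : ι → Set (Fin n → ℝ)) (hcl : ∀ i ∈ I, IsClosed (s i))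
    (z : Fin n → ℝ) (ε : ℝ) (hε : 0 < ε)
    (hcov : Metric.ball z ε ⊆ ⋃ i ∈ I, s i) :
    ∃ i ∈ I, (interior (s i)).Nonempty := by
  by_contra h
  push_neg at h
  have hint : ∀ i ∈ I, interior (s i) = ∅ := fun i hi => h i hi
  have key : interior (⋃ i ∈ I, s i) = ∅ := interior_biUnion_eq_empty I s hcl hint
  have hsub : Metric.ball z ε ⊆ interior (⋃ i ∈ I, s i) :=
    interior_maximal hcov Metric.isOpen_ball
  rw [key] at hsub
  exact absurd (hsub (Metric.mem_ball_self hε)) (by simp)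

/-- Affine functions agreeing on a ball agree everywhere. -/
lemma aff_eq_of_ball {n : ℕ} (a b : ℝ × (Fin n → ℝ)) (z : Fin n → ℝ) (ε : ℝ) (hε : 0 < ε)
    (h : ∀ x ∈ Metric.ball z ε, aff a x = aff b x) : ∀ x, aff a x = aff b x := by
  have hz : aff a z = aff b z := h z (Metric.mem_ball_self hε)
  have hslope : ∀ j, a.2 j = b.2 j := by
    intro j
    set w : Fin n → ℝ := Function.update z j (z j + ε / 2) with hw
    have hwmem : w ∈ Metric.ball z ε := by
      rw [Metric.mem_ball, dist_pi_lt_iff hε]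
      intro i
      rcases eq_or_ne i j with rfl | hij
      · rw [hw]
        simp only [Function.update_self]
        rw [Real.dist_eq]
        have he : z i + ε / 2 - z i = ε / 2 := by ring
        rw [he, abs_of_pos (half_pos hε)]
        linarith
      · rw [hw]; simp [Function.update_of_ne hij, hε]
    have hupd : ∀ (c : ℝ × (Fin n → ℝ)) (i : Fin n), c.2 i * w i =
        Function.update (fun i' => c.2 i' * z i') j (c.2 j * (z j + ε / 2)) i := by
      intro c i
      rcases eq_or_ne i j with rfl | hij
      · simp [hw]
      · simp [hw, Function.update_of_ne hij]
    have hsum : ∀ c : ℝ × (Fin n → ℝ), aff c w = aff c z + c.2 j * (ε / 2) := by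
      intro c
      have e1 : ∑ i, c.2 i * z i = c.2 j * z j + ∑ i ∈ Finset.univ \ {j}, c.2 i * z i := by
        rw [← Finset.sum_update_of_mem (Finset.mem_univ j), Function.update_eq_self]
      have e2 : ∑ i, c.2 i * w i
          = c.2 j * (z j + ε / 2) + ∑ i ∈ Finset.univ \ {j}, c.2 i * z i := by
        rw [Finset.sum_congr rfl fun i _ => hupd c i,
          Finset.sum_update_of_mem (Finset.mem_univ j)]
      unfold aff
      rw [e1, e2]; ring
    have hwv : aff a w = aff b w := h w hwmem
    rw [hsum a, hsum b, hz] at hwv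
    have h' : a.2 j * (ε / 2) = b.2 j * (ε / 2) := by linarith
    exact mul_right_cancel₀ (ne_of_gt (half_pos hε)) h'
  intro x
  have hc : a.1 = b.1 := by
    have hz' := hz
    unfold aff at hz'
    rw [Finset.sum_congr rfl fun i _ => by rw [hslope i]] at hz'
    linarith
  unfold aff
  rw [hc, Finset.sum_congr rfl fun i _ => by rw [hslope i]]

/-- Any function that is a finite min of affine functions and pointwise takes values of
affine functions from the finite collection `A` is the min of a nonempty subcollection
of `A`. -/
lemma core {n : ℕ} (A L : Finset (ℝ × (Fin n → ℝ))) (hL : L.Nonempty)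
    (g : (Fin n → ℝ) → ℝ)
    (hg : ∀ x, g x = L.inf' hL fun a => aff a x)
    (hA : ∀ x, ∃ a ∈ A, g x = aff a x) :
    ∃ S : Finset (ℝ × (Fin n → ℝ)), S ⊆ A ∧ ∃ hS : S.Nonempty,
      ∀ x, g x = S.inf' hS fun a => aff a x := by
  classical
  have hgc : Continuous g := by
    have h0 : g = fun x => L.inf' hL fun a => aff a x := funext hg
    rw [h0]; exact continuous_inf' L hL
  have hglow : ∀ k ∈ L, ∀ x, g x ≤ aff k x := by
    intro k hk x; rw [hg x]; exact Finset.inf'_le _ hk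
  set S : Finset (ℝ × (Fin n → ℝ)) := A.filter (fun a => ∀ x, g x ≤ aff a x) with hSdef
  set E : (ℝ × (Fin n → ℝ)) × (ℝ × (Fin n → ℝ)) → Set (Fin n → ℝ) :=
    fun ka => {x | aff ka.1 x = g x} ∩ {x | aff ka.2 x = g x} with hEdef
  have hEcl : ∀ ka, IsClosed (E ka) := fun ka =>
    (isClosed_eq (continuous_aff _) hgc).inter (isClosed_eq (continuous_aff _) hgc)
  have hcov : ∀ x, ∃ ka ∈ L ×ˢ A, x ∈ E ka := by
    intro x
    obtain ⟨k, hk, hkx⟩ := Finset.exists_mem_eq_inf' hL (fun a => aff a x)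
    obtain ⟨a, ha, hax⟩ := hA x
    refine ⟨(k, a), Finset.mem_product.2 ⟨hk, ha⟩, ⟨?_, hax.symm⟩⟩
    show aff k x = g x
    rw [hg x, hkx]
  have main : ∀ (z : Fin n → ℝ) (ε : ℝ), 0 < ε →
      ∃ a ∈ S, ∃ x ∈ Metric.closedBall z ε, aff a x = g x := by
    intro z ε hε
    have hcov' : Metric.ball z ε ⊆ ⋃ ka ∈ L ×ˢ A, (E ka ∩ Metric.closedBall z ε) := by
      intro x hx
      obtain ⟨ka, hka, hxE⟩ := hcov x
      exact Set.mem_biUnion hka ⟨hxE, Metric.ball_subset_closedBall hx⟩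
    obtain ⟨ka, hka, w, hw⟩ := exists_nonempty_interior (L ×ˢ A) _
      (fun ka _ => (hEcl ka).inter Metric.isClosed_closedBall) z ε hε hcov'
    obtain ⟨δ, hδ, hball⟩ := Metric.isOpen_iff.1 isOpen_interior w hw
    have hwE : w ∈ E ka := (interior_subset hw).1
    have hwB : w ∈ Metric.closedBall z ε := (interior_subset hw).2
    have heq : ∀ x, aff ka.1 x = aff ka.2 x := by
      apply aff_eq_of_ball ka.1 ka.2 w δ hδ
      intro x hx
      have hxE : x ∈ E ka := (interior_subset (hball hx)).1
      rw [hxE.1, hxE.2]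
    have haS : ka.2 ∈ S := by
      rw [hSdef, Finset.mem_filter]
      refine ⟨(Finset.mem_product.1 hka).2, fun x => ?_⟩
      rw [← heq x]
      exact hglow ka.1 (Finset.mem_product.1 hka).1 x
    exact ⟨ka.2, haS, w, hwB, hwE.2⟩
  obtain ⟨a0, ha0, -⟩ := main 0 1 one_pos
  have hSne : S.Nonempty := ⟨a0, ha0⟩
  refine ⟨S, Finset.filter_subset _ _, hSne, ?_⟩
  have hle : ∀ x, g x ≤ S.inf' hSne fun a => aff a x := by
    intro x
    apply Finset.le_inf'
    intro a haS
    exact (Finset.mem_filter.1 haS).2 x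
  intro x0
  have hx0 : x0 ∈ closure {x : Fin n → ℝ | (S.inf' hSne fun a => aff a x) = g x} := by
    rw [Metric.mem_closure_iff]
    intro ε hε
    obtain ⟨a, haS, x, hxB, hxeq⟩ := main x0 (ε/2) (half_pos hε)
    refine ⟨x, ?_, ?_⟩
    · have h1 : (S.inf' hSne fun a => aff a x) ≤ g x := by
        rw [← hxeq]; exact Finset.inf'_le _ haS
      exact le_antisymm h1 (hle x)
    · calc dist x0 x = dist x x0 := dist_comm _ _
        _ ≤ ε/2 := Metric.mem_closedBall.1 hxB
        _ < ε := by linarith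
  have hfin := (isClosed_eq (continuous_inf' S hSne) hgc).closure_subset hx0
  exact hfin.symm

/-- The finite collection of candidate affine functions coming from pairs of monomials
of the `f i`. -/
noncomputable def cand {n d : ℕ} (f : Fin (d+1) → TropPoly n) : Finset (ℝ × (Fin n → ℝ)) :=
  (Finset.univ ×ˢ Finset.univ : Finset (Fin (d+1) × Fin (d+1))).biUnion fun ii =>
    ((f ii.1).monos ×ˢ (f ii.2).monos).image fun pq =>
      ((pq.1.1 - pq.2.1) / (((ii.2 : ℕ) : ℝ) - ((ii.1 : ℕ) : ℝ)),
        fun j => ((pq.1.2 j : ℝ) - (pq.2.2 j : ℝ)) / (((ii.2 : ℕ) : ℝ) - ((ii.1 : ℕ) : ℝ)))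

lemma resolution_pointwise {n d : ℕ} (f : Fin (d+1) → TropPoly n)
    (y0 : ℝ) (x : Fin n → ℝ) (h : TiesAt f x y0) :
    ∃ a ∈ cand f, y0 = aff a x := by
  classical
  obtain ⟨i₁, i₂, hne, heq, -⟩ := h
  obtain ⟨p, hp, hpx⟩ := Finset.exists_mem_eq_inf' (f i₁).ne
    (fun p => p.1 + ∑ j, (p.2 j : ℝ) * x j)
  obtain ⟨q, hq, hqx⟩ := Finset.exists_mem_eq_inf' (f i₂).ne
    (fun p => p.1 + ∑ j, (p.2 j : ℝ) * x j)
  set c : ℝ := ((i₂ : ℕ) : ℝ) - ((i₁ : ℕ) : ℝ) with hcdef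
  have hc : c ≠ 0 := by
    have hne' : (i₁ : ℕ) ≠ (i₂ : ℕ) := fun hc => hne (Fin.ext hc)
    intro h0
    apply hne'
    have : ((i₁ : ℕ) : ℝ) = ((i₂ : ℕ) : ℝ) := by
      rw [hcdef] at h0; linarith [sub_eq_zero.1 h0]
    exact_mod_cast this
  refine ⟨((p.1 - q.1) / c, fun j => ((p.2 j : ℝ) - (q.2 j : ℝ)) / c), ?_, ?_⟩
  · rw [cand, Finset.mem_biUnion]
    refine ⟨(i₁, i₂), Finset.mem_product.2 ⟨Finset.mem_univ _, Finset.mem_univ _⟩, ?_⟩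
    rw [Finset.mem_image]
    exact ⟨(p, q), Finset.mem_product.2 ⟨hp, hq⟩, rfl⟩
  · have hP : (f i₁).eval x = p.1 + ∑ j, (p.2 j : ℝ) * x j := hpx
    have hQ : (f i₂).eval x = q.1 + ∑ j, (q.2 j : ℝ) * x j := hqx
    have heq' : (f i₁).eval x + ((i₁ : ℕ) : ℝ) * y0 = (f i₂).eval x + ((i₂ : ℕ) : ℝ) * y0 := heq
    rw [hP, hQ] at heq'
    have hsum : ∑ j, (((p.2 j : ℝ) - (q.2 j : ℝ)) / c) * x j
        = (∑ j, (p.2 j : ℝ) * x j - ∑ j, (q.2 j : ℝ) * x j) / c := by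
      calc ∑ j, (((p.2 j : ℝ) - (q.2 j : ℝ)) / c) * x j
          = ∑ j, ((p.2 j : ℝ) * x j - (q.2 j : ℝ) * x j) / c :=
            Finset.sum_congr rfl fun j _ => by ring
        _ = (∑ j, ((p.2 j : ℝ) * x j - (q.2 j : ℝ) * x j)) / c := by rw [Finset.sum_div]
        _ = (∑ j, (p.2 j : ℝ) * x j - ∑ j, (q.2 j : ℝ) * x j) / c := by
            rw [Finset.sum_sub_distrib]
    show y0 = (p.1 - q.1) / c + ∑ j, (((p.2 j : ℝ) - (q.2 j : ℝ)) / c) * x j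
    rw [hsum, ← add_div, eq_div_iff hc, hcdef]
    linear_combination (-1 : ℝ) * heq'

end ResolveAux

open ResolveAux in
/-- If `f_0, ..., f_d` are tropical polynomials with integer coefficients, then the set of
resolutions of `f`, regarded as functions from `R^n` to `R`, is finite. -/
theorem finite_resolutions {n d : ℕ} (f : Fin (d+1) → TropPoly n)
    (hint : ∀ i, HasIntCoeffs (f i)) :
    {g : (Fin n → ℝ) → ℝ | ∃ y : NPPoly n, IsResolution f y.eval ∧ g = y.eval}.Finite := by
  classical
  set A := cand f with hAdef
  set F : Finset (ℝ × (Fin n → ℝ)) → ((Fin n → ℝ) → ℝ) :=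
    fun S => if h : S.Nonempty then (fun x => S.inf' h fun a => aff a x) else fun _ => 0
    with hFdef
  apply Set.Finite.subset ((A.powerset.finite_toSet).image F)
  rintro g ⟨y, hres, rfl⟩
  set m : (ℚ × (Fin n → ℚ)) → ℝ × (Fin n → ℝ) :=
    fun p => ((p.1 : ℝ), fun j => ((p.2 j : ℚ) : ℝ)) with hm
  set L : Finset (ℝ × (Fin n → ℝ)) := y.monos.image m with hLdef
  have hLne : L.Nonempty := y.ne.image _
  have hgdef : ∀ x, y.eval x = L.inf' hLne fun a => aff a x := by
    intro x
    show y.eval x = (y.monos.image m).inf' hLne (fun a => aff a x)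
    rw [Finset.inf'_image]
    rfl
  have hAres : ∀ x, ∃ a ∈ A, y.eval x = aff a x := fun x =>
    resolution_pointwise f (y.eval x) x (hres x)
  obtain ⟨S, hSsub, hSne, hSval⟩ := core A L hLne y.eval hgdef hAres
  refine ⟨S, ?_, ?_⟩
  · simpa [Finset.mem_powerset] using hSsub
  · rw [hFdef]
    simp only [dif_pos hSne]
    funext x
    exact (hSval x).symm
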